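/- Let σ₁, σ₂ be real with σ₂ > 1/2, σ₁ + σ₂ > 1, and σ₂ ≥ σ₁ (or σ₁ > σ₂). Then for every ε > 0, ∑_{k > T} (∑_{mn=k, m<n} m^{-σ₁} n^{-σ₂})² ≪ T^{1−2σ₂+ε} when σ₁ ≥ σ₂, and ≪ T^{1−σ₁−σ₂+ε} when σ₁ < σ₂, as T → ∞. -/

import Mathlib

open Complex Filter Asymptotics Real

/-- The inner sum `∑_{mn = k, m < n} m^{-σ₁} n^{-σ₂}` over factorizations of `k`. -/
noncomputable def boxTerm (σ₁ σ₂ : ℝ) (k : ℕ) : ℝ :=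
  ∑ p ∈ (Nat.divisorsAntidiagonal k).filter (fun p => p.1 < p.2),
    (p.1 : ℝ) ^ (-σ₁) * (p.2 : ℝ) ^ (-σ₂)

lemma quad_facts {a b c d k : ℕ} (hab : a * b = k) (hcd : c * d = k) (hk : k ≠ 0) :
    (Nat.gcd a c) * (a / Nat.gcd a c) = a ∧
    (Nat.gcd a c) * (c / Nat.gcd a c) = c ∧
    (c / Nat.gcd a c) * (b / (c / Nat.gcd a c)) = b ∧
    0 < Nat.gcd a c ∧ 0 < a / Nat.gcd a c ∧ 0 < c / Nat.gcd a c ∧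
    0 < b / (c / Nat.gcd a c) := by
  have habne : a * b ≠ 0 := by rw [hab]; exact hk
  have hcdne : c * d ≠ 0 := by rw [hcd]; exact hk
  have ha : 0 < a := Nat.pos_of_ne_zero (fun h => habne (by rw [h, zero_mul]))
  have hb : 0 < b := Nat.pos_of_ne_zero (fun h => habne (by rw [h, mul_zero]))
  have hc : 0 < c := Nat.pos_of_ne_zero (fun h => hcdne (by rw [h, zero_mul]))
  set g := Nat.gcd a c with hgdef
  have hg : 0 < g := Nat.gcd_pos_of_pos_left _ ha
  have hga : g ∣ a := Nat.gcd_dvd_left a c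
  have hgc : g ∣ c := Nat.gcd_dvd_right a c
  have hu : g * (a / g) = a := Nat.mul_div_cancel' hga
  have hv : g * (c / g) = c := Nat.mul_div_cancel' hgc
  have cop : Nat.Coprime (a / g) (c / g) := Nat.coprime_div_gcd_div_gcd hg
  have hub : (a / g) * b = (c / g) * d := by
    apply Nat.eq_of_mul_eq_mul_left hg
    rw [← mul_assoc, hu, ← mul_assoc, hv, hab, hcd]
  have hvb : (c / g) ∣ b := cop.symm.dvd_of_dvd_mul_left ⟨d, hub⟩
  have hw : (c / g) * (b / (c / g)) = b := Nat.mul_div_cancel' hvb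
  have hupos : 0 < a / g := Nat.div_pos (Nat.le_of_dvd ha hga) hg
  have hvpos : 0 < c / g := Nat.div_pos (Nat.le_of_dvd hc hgc) hg
  have hwpos : 0 < b / (c / g) := Nat.div_pos (Nat.le_of_dvd hb hvb) hvpos
  exact ⟨hu, hv, hw, hg, hupos, hvpos, hwpos⟩

lemma sum_fst_mul {α β : Type*} (A : Finset α) (B : Finset β) (f : α → ℝ) (g : β → ℝ) :
    ∑ y ∈ A ×ˢ B, f y.1 * g y.2 = (∑ a ∈ A, f a) * (∑ b ∈ B, g b) := by
  rw [Finset.sum_mul_sum, Finset.sum_product]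

lemma key_partial (s : ℝ) (N : ℕ) :
    ∑ k ∈ Finset.range N, ((Nat.divisorsAntidiagonal k).card : ℝ)^2 * (k:ℝ)^(-s)
      ≤ (∑ n ∈ Finset.range N, (n:ℝ)^(-s))^4 := by
  classical
  have f : ℕ → ℝ := fun n => (n:ℝ)^(-s)
  set F : ℕ×ℕ×ℕ×ℕ → ℝ :=
    fun y => (y.1:ℝ)^(-s) * ((y.2.1:ℝ)^(-s) * ((y.2.2.1:ℝ)^(-s) * (y.2.2.2:ℝ)^(-s)))
    with hF
  set Φ : ((_ : ℕ) × ((ℕ×ℕ)×(ℕ×ℕ))) → ℕ×ℕ×ℕ×ℕ := fun x =>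
    (Nat.gcd x.2.1.1 x.2.2.1, x.2.1.1 / Nat.gcd x.2.1.1 x.2.2.1,
     x.2.2.1 / Nat.gcd x.2.1.1 x.2.2.1,
     x.2.1.2 / (x.2.2.1 / Nat.gcd x.2.1.1 x.2.2.1)) with hΦ
  set S := (Finset.range N).sigma
      (fun k => Nat.divisorsAntidiagonal k ×ˢ Nat.divisorsAntidiagonal k) with hS
  have hmem : ∀ x ∈ S, x.2.1.1 * x.2.1.2 = x.1 ∧ x.2.2.1 * x.2.2.2 = x.1 ∧
      x.1 ≠ 0 ∧ x.1 < N := by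
    intro x hx
    rw [hS, Finset.mem_sigma, Finset.mem_product] at hx
    obtain ⟨hk, h1, h2⟩ := hx
    rw [Nat.mem_divisorsAntidiagonal] at h1 h2
    exact ⟨h1.1, h2.1, h1.2, Finset.mem_range.mp hk⟩
  -- product identity for image points
  have hprod : ∀ x ∈ S, (Φ x).1 * ((Φ x).2.1 * ((Φ x).2.2.1 * (Φ x).2.2.2)) = x.1 := by
    intro x hx
    obtain ⟨hab, hcd, hk, _⟩ := hmem x hx
    obtain ⟨hu, hv, hw, _, _, _, _⟩ := quad_facts hab hcd hk
    show Nat.gcd x.2.1.1 x.2.2.1 * (_ * (_ * _)) = x.1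
    calc Nat.gcd x.2.1.1 x.2.2.1 *
          (x.2.1.1 / Nat.gcd x.2.1.1 x.2.2.1 *
            (x.2.2.1 / Nat.gcd x.2.1.1 x.2.2.1 *
              (x.2.1.2 / (x.2.2.1 / Nat.gcd x.2.1.1 x.2.2.1))))
        = (Nat.gcd x.2.1.1 x.2.2.1 * (x.2.1.1 / Nat.gcd x.2.1.1 x.2.2.1)) *
            (x.2.2.1 / Nat.gcd x.2.1.1 x.2.2.1 *
              (x.2.1.2 / (x.2.2.1 / Nat.gcd x.2.1.1 x.2.2.1))) := by ring
      _ = x.2.1.1 * x.2.1.2 := by rw [hu, hw]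
      _ = x.1 := hab
  have hval : ∀ x ∈ S, F (Φ x) = (x.1:ℝ)^(-s) := by
    intro x hx
    have hp := hprod x hx
    rw [hF]
    show ((Φ x).1:ℝ)^(-s) * (((Φ x).2.1:ℝ)^(-s) * (((Φ x).2.2.1:ℝ)^(-s) *
      ((Φ x).2.2.2:ℝ)^(-s))) = (x.1:ℝ)^(-s)
    rw [← Real.mul_rpow (by positivity) (by positivity),
        ← Real.mul_rpow (by positivity) (by positivity),
        ← Real.mul_rpow (by positivity) (by positivity)]
    congr 1
    push_cast [← hp]
    ring
  have hinj : ∀ x ∈ S, ∀ y ∈ S, Φ x = Φ y → x = y := by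
    intro x hx y hy hxy
    obtain ⟨hab₁, hcd₁, hk₁, _⟩ := hmem x hx
    obtain ⟨hab₂, hcd₂, hk₂, _⟩ := hmem y hy
    obtain ⟨hu₁, hv₁, hw₁, _, _, _, _⟩ := quad_facts hab₁ hcd₁ hk₁
    obtain ⟨hu₂, hv₂, hw₂, _, _, _, _⟩ := quad_facts hab₂ hcd₂ hk₂
    obtain ⟨k₁, ⟨⟨a₁,b₁⟩,⟨c₁,d₁⟩⟩⟩ := x
    obtain ⟨k₂, ⟨⟨a₂,b₂⟩,⟨c₂,d₂⟩⟩⟩ := y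
    simp only [hΦ, Prod.mk.injEq] at hxy
    obtain ⟨e1, e2, e3, e4⟩ := hxy
    simp only at hu₁ hv₁ hw₁ hu₂ hv₂ hw₂ hab₁ hcd₁ hab₂ hcd₂ hk₁ hk₂
    have ha : a₁ = a₂ := by
      calc a₁ = Nat.gcd a₁ c₁ * (a₁ / Nat.gcd a₁ c₁) := hu₁.symm
        _ = Nat.gcd a₂ c₂ * (a₂ / Nat.gcd a₂ c₂) := by rw [e2, e1]
        _ = a₂ := hu₂
    have hc : c₁ = c₂ := by
      calc c₁ = Nat.gcd a₁ c₁ * (c₁ / Nat.gcd a₁ c₁) := hv₁.symm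
        _ = Nat.gcd a₂ c₂ * (c₂ / Nat.gcd a₂ c₂) := by rw [e3, e1]
        _ = c₂ := hv₂
    have hb : b₁ = b₂ := by
      calc b₁ = (c₁ / Nat.gcd a₁ c₁) * (b₁ / (c₁ / Nat.gcd a₁ c₁)) := hw₁.symm
        _ = (c₂ / Nat.gcd a₂ c₂) * (b₂ / (c₂ / Nat.gcd a₂ c₂)) := by rw [e4, e3]
        _ = b₂ := hw₂
    have hk : k₁ = k₂ := by rw [← hab₁, ← hab₂, ha, hb]
    have hc₁pos : 0 < c₁ :=
      Nat.pos_of_ne_zero fun h => hk₁ (by rw [← hcd₁, h, zero_mul])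
    have hd : d₁ = d₂ := by
      apply Nat.eq_of_mul_eq_mul_left hc₁pos
      rw [hcd₁, hk, ← hcd₂, hc]
    subst ha hb hc hd hk
    rfl
  have himg : S.image Φ ⊆
      Finset.range N ×ˢ (Finset.range N ×ˢ (Finset.range N ×ˢ Finset.range N)) := by
    intro y hy
    obtain ⟨x, hx, rfl⟩ := Finset.mem_image.mp hy
    obtain ⟨hab, hcd, hk, hkN⟩ := hmem x hx
    have hp := hprod x hx
    have hkpos : 0 < x.1 := Nat.pos_of_ne_zero hk
    have hG : (Φ x).1 ≤ x.1 := Nat.le_of_dvd hkpos ⟨(Φ x).2.1 * ((Φ x).2.2.1 * (Φ x).2.2.2), hp.symm⟩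
    have hU : (Φ x).2.1 ≤ x.1 := Nat.le_of_dvd hkpos ⟨(Φ x).1 * ((Φ x).2.2.1 * (Φ x).2.2.2), by rw [← hp]; ring⟩
    have hV : (Φ x).2.2.1 ≤ x.1 := Nat.le_of_dvd hkpos ⟨(Φ x).1 * ((Φ x).2.1 * (Φ x).2.2.2), by rw [← hp]; ring⟩
    have hW : (Φ x).2.2.2 ≤ x.1 := Nat.le_of_dvd hkpos ⟨(Φ x).1 * ((Φ x).2.1 * (Φ x).2.2.1), by rw [← hp]; ring⟩
    simp only [Finset.mem_product, Finset.mem_range]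
    exact ⟨lt_of_le_of_lt hG hkN, lt_of_le_of_lt hU hkN,
      lt_of_le_of_lt hV hkN, lt_of_le_of_lt hW hkN⟩
  have hstep4 : ∑ y ∈ Finset.range N ×ˢ (Finset.range N ×ˢ (Finset.range N ×ˢ Finset.range N)),
      F y = (∑ n ∈ Finset.range N, (n:ℝ)^(-s))^4 := by
    have t1 := sum_fst_mul (Finset.range N) (Finset.range N ×ˢ (Finset.range N ×ˢ Finset.range N))
      (fun n : ℕ => (n:ℝ)^(-s))
      (fun z : ℕ×ℕ×ℕ => (z.1:ℝ)^(-s) * ((z.2.1:ℝ)^(-s) * (z.2.2:ℝ)^(-s)))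
    have t2 := sum_fst_mul (Finset.range N) (Finset.range N ×ˢ Finset.range N)
      (fun n : ℕ => (n:ℝ)^(-s))
      (fun z : ℕ×ℕ => (z.1:ℝ)^(-s) * (z.2:ℝ)^(-s))
    have t3 := sum_fst_mul (Finset.range N) (Finset.range N)
      (fun n : ℕ => (n:ℝ)^(-s)) (fun n : ℕ => (n:ℝ)^(-s))
    rw [hF]
    rw [show (fun y : ℕ×ℕ×ℕ×ℕ => (y.1:ℝ)^(-s) * ((y.2.1:ℝ)^(-s) * ((y.2.2.1:ℝ)^(-s) * (y.2.2.2:ℝ)^(-s))))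
      = (fun y : ℕ×ℕ×ℕ×ℕ => (y.1:ℝ)^(-s) *
        ((fun z : ℕ×ℕ×ℕ => (z.1:ℝ)^(-s) * ((z.2.1:ℝ)^(-s) * (z.2.2:ℝ)^(-s))) y.2)) from rfl]
    rw [t1, t2, t3]
    ring
  calc ∑ k ∈ Finset.range N, ((Nat.divisorsAntidiagonal k).card : ℝ)^2 * (k:ℝ)^(-s)
      = ∑ k ∈ Finset.range N,
          ∑ _x ∈ Nat.divisorsAntidiagonal k ×ˢ Nat.divisorsAntidiagonal k, (k:ℝ)^(-s) := by
        refine Finset.sum_congr rfl fun k _ => ?_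
        rw [Finset.sum_const, Finset.card_product, nsmul_eq_mul]
        push_cast
        ring
    _ = ∑ x ∈ S, ((x.1:ℝ))^(-s) := by rw [hS, Finset.sum_sigma']
    _ = ∑ x ∈ S, F (Φ x) := Finset.sum_congr rfl fun x hx => (hval x hx).symm
    _ = ∑ y ∈ S.image Φ, F y := (Finset.sum_image hinj).symm
    _ ≤ ∑ y ∈ Finset.range N ×ˢ (Finset.range N ×ˢ (Finset.range N ×ˢ Finset.range N)), F y := by
        apply Finset.sum_le_sum_of_subset_of_nonneg himg
        intro y _ _
        rw [hF]
        positivity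
    _ = (∑ n ∈ Finset.range N, (n:ℝ)^(-s))^4 := hstep4

lemma summable_dsq {s : ℝ} (hs : 1 < s) :
    Summable (fun k : ℕ => ((Nat.divisorsAntidiagonal k).card : ℝ)^2 * (k:ℝ)^(-s)) := by
  have hf : Summable (fun n : ℕ => (n:ℝ)^(-s)) :=
    Real.summable_nat_rpow.mpr (by linarith)
  apply summable_of_sum_range_le (c := (∑' n : ℕ, (n:ℝ)^(-s))^4)
  · intro k; positivity
  · intro N
    refine (key_partial s N).trans ?_
    have h1 : ∑ n ∈ Finset.range N, (n:ℝ)^(-s) ≤ ∑' n : ℕ, (n:ℝ)^(-s) :=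
      Summable.sum_le_tsum _ (fun i _ => by positivity) hf
    have h0 : (0:ℝ) ≤ ∑ n ∈ Finset.range N, (n:ℝ)^(-s) := by positivity
    exact pow_le_pow_left₀ h0 h1 4

lemma term_le {σ₁ σ₂ β : ℝ} (h1 : β ≤ σ₂) (h2 : 2*β ≤ σ₁ + σ₂) {x y : ℝ}
    (hx : 1 ≤ x) (hxy : x ≤ y) : x^(-σ₁) * y^(-σ₂) ≤ (x*y)^(-β) := by
  have hx0 : (0:ℝ) < x := lt_of_lt_of_le one_pos hx
  have hy1 : (1:ℝ) ≤ y := hx.trans hxy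
  have hy0 : (0:ℝ) < y := lt_of_lt_of_le one_pos hy1
  have key : x^(β-σ₁) * y^(β-σ₂) ≤ 1 := by
    rcases le_or_gt β σ₁ with hb | hb
    · have a1 : x^(β-σ₁) ≤ 1 := Real.rpow_le_one_of_one_le_of_nonpos hx (by linarith)
      have a2 : y^(β-σ₂) ≤ 1 := Real.rpow_le_one_of_one_le_of_nonpos hy1 (by linarith)
      calc x^(β-σ₁) * y^(β-σ₂) ≤ 1 * 1 :=
            mul_le_mul a1 a2 (Real.rpow_nonneg hy0.le _) one_pos.le
        _ = 1 := one_mul 1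
    · have a1 : x^(β-σ₁) ≤ y^(β-σ₁) := Real.rpow_le_rpow hx0.le hxy (by linarith)
      calc x^(β-σ₁) * y^(β-σ₂) ≤ y^(β-σ₁) * y^(β-σ₂) :=
            mul_le_mul_of_nonneg_right a1 (Real.rpow_nonneg hy0.le _)
        _ = y^((β-σ₁)+(β-σ₂)) := (Real.rpow_add hy0 _ _).symm
        _ ≤ 1 := Real.rpow_le_one_of_one_le_of_nonpos hy1 (by linarith)
  have e1 : x^(-σ₁) = x^(-β) * x^(β-σ₁) := by
    rw [← Real.rpow_add hx0]; congr 1; ring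
  have e2 : y^(-σ₂) = y^(-β) * y^(β-σ₂) := by
    rw [← Real.rpow_add hy0]; congr 1; ring
  calc x^(-σ₁) * y^(-σ₂) = (x^(-β) * y^(-β)) * (x^(β-σ₁) * y^(β-σ₂)) := by
        rw [e1, e2]; ring
    _ ≤ (x^(-β) * y^(-β)) * 1 := by
        apply mul_le_mul_of_nonneg_left key
        positivity
    _ = (x*y)^(-β) := by rw [mul_one, ← Real.mul_rpow hx0.le hy0.le]

lemma boxTerm_nonneg (σ₁ σ₂ : ℝ) (k : ℕ) : 0 ≤ boxTerm σ₁ σ₂ k := by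
  unfold boxTerm
  apply Finset.sum_nonneg
  intro p _
  positivity

lemma boxTerm_le {σ₁ σ₂ β : ℝ} (h1 : β ≤ σ₂) (h2 : 2*β ≤ σ₁ + σ₂) (k : ℕ) :
    boxTerm σ₁ σ₂ k ≤ ((Nat.divisorsAntidiagonal k).card : ℝ) * (k:ℝ)^(-β) := by
  unfold boxTerm
  calc ∑ p ∈ (Nat.divisorsAntidiagonal k).filter (fun p => p.1 < p.2),
        (p.1 : ℝ) ^ (-σ₁) * (p.2 : ℝ) ^ (-σ₂)
      ≤ ∑ _p ∈ (Nat.divisorsAntidiagonal k).filter (fun p => p.1 < p.2), (k:ℝ)^(-β) := by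
        apply Finset.sum_le_sum
        intro p hp
        rw [Finset.mem_filter] at hp
        obtain ⟨hpm, hplt⟩ := hp
        rw [Nat.mem_divisorsAntidiagonal] at hpm
        obtain ⟨hpk, hk0⟩ := hpm
        have hp1 : 0 < p.1 := Nat.pos_of_ne_zero fun h => hk0 (by rw [← hpk, h, zero_mul])
        have hx : (1:ℝ) ≤ (p.1:ℝ) := by exact_mod_cast hp1
        have hxy : (p.1:ℝ) ≤ (p.2:ℝ) := by exact_mod_cast hplt.le
        have := term_le h1 h2 hx hxy
        calc (p.1 : ℝ) ^ (-σ₁) * (p.2 : ℝ) ^ (-σ₂) ≤ ((p.1:ℝ) * (p.2:ℝ))^(-β) := this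
          _ = (k:ℝ)^(-β) := by rw [show ((p.1:ℝ) * (p.2:ℝ)) = (k:ℝ) by exact_mod_cast congrArg Nat.cast hpk]
    _ = (((Nat.divisorsAntidiagonal k).filter (fun p => p.1 < p.2)).card : ℝ) * (k:ℝ)^(-β) := by
        rw [Finset.sum_const, nsmul_eq_mul]
    _ ≤ ((Nat.divisorsAntidiagonal k).card : ℝ) * (k:ℝ)^(-β) := by
        apply mul_le_mul_of_nonneg_right _ (Real.rpow_nonneg (Nat.cast_nonneg k) _)
        exact_mod_cast Finset.card_filter_le _ _

lemma helper (σ₁ σ₂ β ε : ℝ) (hβ : 1 < 2*β) (h1 : β ≤ σ₂) (h2 : 2*β ≤ σ₁+σ₂) (hε : 0 < ε) :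
    ∃ K > (0:ℝ), ∀ T : ℝ, 1 ≤ T →
      (∑' k : ℕ, if T < (k : ℝ) then (boxTerm σ₁ σ₂ k) ^ 2 else 0) ≤ K * T^(1-2*β+ε) := by
  set s : ℝ := 1 + (min ε (2*β-1))/2 with hsdef
  have hmin : 0 < min ε (2*β-1) := lt_min hε (by linarith)
  have hs1 : 1 < s := by rw [hsdef]; linarith
  have hs2β : s ≤ 2*β := by
    have := min_le_right ε (2*β-1)
    rw [hsdef]; linarith
  have hsε : s - 2*β ≤ 1-2*β+ε := by
    have := min_le_left ε (2*β-1)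
    rw [hsdef]; linarith
  have hsum : Summable (fun k : ℕ => ((Nat.divisorsAntidiagonal k).card : ℝ)^2 * (k:ℝ)^(-s)) :=
    summable_dsq hs1
  refine ⟨(∑' k : ℕ, ((Nat.divisorsAntidiagonal k).card : ℝ)^2 * (k:ℝ)^(-s)) + 1, ?_, ?_⟩
  · have : 0 ≤ ∑' k : ℕ, ((Nat.divisorsAntidiagonal k).card : ℝ)^2 * (k:ℝ)^(-s) :=
      tsum_nonneg (fun k => by positivity)
    linarith
  intro T hT
  have hT0 : (0:ℝ) < T := lt_of_lt_of_le one_pos hT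
  have hpt : ∀ k : ℕ, (if T < (k : ℝ) then (boxTerm σ₁ σ₂ k) ^ 2 else 0)
      ≤ T^(s-2*β) * (((Nat.divisorsAntidiagonal k).card : ℝ)^2 * (k:ℝ)^(-s)) := by
    intro k
    by_cases hTk : T < (k:ℝ)
    · rw [if_pos hTk]
      have hk1 : (1:ℝ) ≤ (k:ℝ) := hT.trans hTk.le
      have hk0 : (0:ℝ) < (k:ℝ) := lt_of_lt_of_le one_pos hk1
      have hb := boxTerm_le h1 h2 k
      have hsq : (boxTerm σ₁ σ₂ k)^2 ≤
          (((Nat.divisorsAntidiagonal k).card : ℝ) * (k:ℝ)^(-β))^2 :=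
        pow_le_pow_left₀ (boxTerm_nonneg σ₁ σ₂ k) hb 2
      have hexp : ((k:ℝ)^(-β))^2 = (k:ℝ)^(-s) * (k:ℝ)^(s-2*β) := by
        rw [← Real.rpow_add hk0, sq, ← Real.rpow_add hk0]
        congr 1; ring
      have hkT : (k:ℝ)^(s-2*β) ≤ T^(s-2*β) :=
        Real.rpow_le_rpow_of_nonpos hT0 hTk.le (by linarith)
      calc (boxTerm σ₁ σ₂ k)^2
          ≤ (((Nat.divisorsAntidiagonal k).card : ℝ))^2 * ((k:ℝ)^(-s) * (k:ℝ)^(s-2*β)) := by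
            rw [← hexp]; rw [mul_pow] at hsq; exact hsq
        _ ≤ (((Nat.divisorsAntidiagonal k).card : ℝ))^2 * ((k:ℝ)^(-s) * T^(s-2*β)) := by
            apply mul_le_mul_of_nonneg_left _ (by positivity)
            exact mul_le_mul_of_nonneg_left hkT (by positivity)
        _ = T^(s-2*β) * (((Nat.divisorsAntidiagonal k).card : ℝ)^2 * (k:ℝ)^(-s)) := by ring
    · rw [if_neg hTk]
      positivity
  have hsum2 : Summable (fun k : ℕ =>
      T^(s-2*β) * (((Nat.divisorsAntidiagonal k).card : ℝ)^2 * (k:ℝ)^(-s))) :=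
    hsum.mul_left _
  have hsumL : Summable (fun k : ℕ => if T < (k : ℝ) then (boxTerm σ₁ σ₂ k) ^ 2 else 0) := by
    apply Summable.of_nonneg_of_le _ hpt hsum2
    intro k
    split
    · positivity
    · exact le_refl 0
  calc (∑' k : ℕ, if T < (k : ℝ) then (boxTerm σ₁ σ₂ k) ^ 2 else 0)
      ≤ ∑' k : ℕ, T^(s-2*β) * (((Nat.divisorsAntidiagonal k).card : ℝ)^2 * (k:ℝ)^(-s)) :=
        Summable.tsum_le_tsum hpt hsumL hsum2
    _ = T^(s-2*β) * ∑' k : ℕ, ((Nat.divisorsAntidiagonal k).card : ℝ)^2 * (k:ℝ)^(-s) :=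
        tsum_mul_left
    _ ≤ ((∑' k : ℕ, ((Nat.divisorsAntidiagonal k).card : ℝ)^2 * (k:ℝ)^(-s)) + 1) * T^(1-2*β+ε) := by
        have hC : 0 ≤ ∑' k : ℕ, ((Nat.divisorsAntidiagonal k).card : ℝ)^2 * (k:ℝ)^(-s) :=
          tsum_nonneg (fun k => by positivity)
        have hB : T^(s-2*β) ≤ T^(1-2*β+ε) := Real.rpow_le_rpow_of_exponent_le hT hsε
        have hP : 0 < T^(1-2*β+ε) := Real.rpow_pos_of_pos hT0 _
        nlinarith [mul_le_mul_of_nonneg_right hB hC]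

theorem stmt15 (σ₁ σ₂ : ℝ) (h₂ : 1/2 < σ₂) (h : 1 < σ₁ + σ₂) (ε : ℝ) (hε : 0 < ε) :
    ∃ K > (0 : ℝ), ∀ T : ℝ, 1 ≤ T →
      (∑' k : ℕ, if T < (k : ℝ) then (boxTerm σ₁ σ₂ k) ^ 2 else 0)
        ≤ K * (if σ₂ ≤ σ₁ then T ^ (1 - 2 * σ₂ + ε) else T ^ (1 - σ₁ - σ₂ + ε)) := by
  by_cases hc : σ₂ ≤ σ₁
  · simp only [if_pos hc]
    obtain ⟨K, hK, hbound⟩ := helper σ₁ σ₂ σ₂ ε (by linarith) le_rfl (by linarith) hε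
    exact ⟨K, hK, fun T hT => by
      have := hbound T hT
      rwa [show 1 - 2*σ₂ + ε = 1 - 2 * σ₂ + ε from by ring] at this⟩
  · simp only [if_neg hc]
    obtain ⟨K, hK, hbound⟩ := helper σ₁ σ₂ ((σ₁+σ₂)/2) ε (by linarith) (by linarith) (by linarith) hε
    refine ⟨K, hK, fun T hT => ?_⟩
    have := hbound T hT
    rwa [show 1 - 2*((σ₁+σ₂)/2) + ε = 1 - σ₁ - σ₂ + ε from by ring] at this
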